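/- Let G = F₂ ≀ S₃ with F₂ the free group on x, y and S₃ = ⟨s₁, s₂ | s₁² = s₂² = (s₁s₂)³ = 1⟩, and let S = {x, y, s₁, s₂, c} with c = s₁s₂ be the generating set of G where x, y generate the copy of F₂ at the coordinate indexed by the identity of S₃. Then pw(G, S) ≤ 20, i.e. every element of G is a product of at most 20 palindromes with respect to S. -/

import Mathlib

section PalindromicWidth

/-- `g` is a palindrome with respect to the (symmetric) generating set `X`:
some word over `X` representing `g` equals its own reverse. -/
def IsPalindrome {G : Type*} [Group G] (X : Set G) (g : G) : Prop :=
  ∃ w : List G, (∀ a ∈ w, a ∈ X) ∧ w.reverse = w ∧ w.prod = g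

/-- The palindromic length of `g` with respect to `X`, valued in `ℕ∞`:
the least `k` such that `g` is a product of `k` palindromes. -/
noncomputable def palLength {G : Type*} [Group G] (X : Set G) (g : G) : ℕ∞ :=
  sInf {k : ℕ∞ | ∃ L : List G, (L.length : ℕ∞) = k ∧ (∀ p ∈ L, IsPalindrome X p) ∧ L.prod = g}

/-- The palindromic width `pw(G, X) = sup_{g ∈ G} l_P(g)`, valued in `ℕ∞`. -/
noncomputable def palWidth (G : Type*) [Group G] (X : Set G) : ℕ∞ :=
  ⨆ g : G, palLength X g

end PalindromicWidth

/-- The permutation action of `K` on the base group `K → H` of the wreath product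
`H ≀ K`, by left translation on the index set: `(k • f) k' = f (k⁻¹ * k')`. -/
def wreathAction (H K : Type*) [Group H] [Group K] : K →* MulAut (K → H) where
  toFun k :=
    { toFun := fun f x => f (k⁻¹ * x)
      invFun := fun f x => f (k * x)
      left_inv := fun f => by funext x; simp [← mul_assoc]
      right_inv := fun f => by funext x; simp [← mul_assoc]
      map_mul' := fun f g => rfl }
  map_one' := by
    ext f x
    simp
  map_mul' := fun a b => by
    ext f x
    simp [mul_assoc]

/-- The wreath product `H ≀ K = (∏_{k ∈ K} H) ⋊ K`. -/
abbrev WreathProduct (H K : Type*) [Group H] [Group K] :=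
  SemidirectProduct (K → H) K (wreathAction H K)

/-- The symmetric group `S₃`, realized as the permutations of `Fin 3`. -/
abbrev S3 := Equiv.Perm (Fin 3)

/-- The wreath product `G = F₂ ≀ S₃`. -/
abbrev F2wrS3 := WreathProduct (FreeGroup (Fin 2)) S3

/-- The generator `x` of the copy of `F₂` at the coordinate indexed by `1 ∈ S₃`. -/
def genX : F2wrS3 := SemidirectProduct.inl (Pi.mulSingle (1 : S3) (FreeGroup.of 0))

/-- The generator `y` of the copy of `F₂` at the coordinate indexed by `1 ∈ S₃`. -/
def genY : F2wrS3 := SemidirectProduct.inl (Pi.mulSingle (1 : S3) (FreeGroup.of 1))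

/-- The generator `s₁` (a standard involution of `S₃`). -/
def genS1 : F2wrS3 := SemidirectProduct.inr (Equiv.swap 0 1)

/-- The generator `s₂` (a standard involution of `S₃`). -/
def genS2 : F2wrS3 := SemidirectProduct.inr (Equiv.swap 1 2)

/-- The generator `c = s₁ s₂`. -/
def genC : F2wrS3 := SemidirectProduct.inr (Equiv.swap 0 1 * Equiv.swap 1 2)

/-- The generating set `S = {x, y, s₁, s₂, c}` of `F₂ ≀ S₃`, together with inverses. -/
def genSet : Set F2wrS3 :=
  {genX, genY, genS1, genS2, genC} ∪ {genX, genY, genS1, genS2, genC}⁻¹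

namespace PWaux

open SemidirectProduct FreeGroup

abbrev F := FreeGroup (Fin 2)
abbrev Gw := F2wrS3

def sa : S3 := Equiv.swap 0 1
def sb : S3 := Equiv.swap 1 2
def cc : S3 := sa * sb
def c2 : S3 := cc * cc
def rr : S3 := sa * sb * sa

lemma s3cases (k : S3) : k = 1 ∨ k = sa ∨ k = sb ∨ k = cc ∨ k = c2 ∨ k = rr := by
  revert k; decide

/-- The embedding of `F₂` at the coordinate indexed by `1`. -/
def emb : F →* Gw where
  toFun u := inl (Pi.mulSingle 1 u)
  map_one' := by simp
  map_mul' u v := by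
    show (inl (Pi.mulSingle (1:S3) (u * v)) : Gw) = inl (Pi.mulSingle 1 u) * inl (Pi.mulSingle 1 v)
    rw [Pi.mulSingle_mul, MonoidHom.map_mul]

lemma emb_def (u : F) : emb u = inl (Pi.mulSingle (1:S3) u) := rfl

lemma embX : emb (FreeGroup.of 0) = genX := rfl
lemma embY : emb (FreeGroup.of 1) = genY := rfl

/-- letter inversion automorphism of F₂ -/
def iota : F →* F := FreeGroup.lift fun i => (FreeGroup.of i)⁻¹

lemma iota_iota (u : F) : iota (iota u) = u := by
  have : (iota.comp iota) = MonoidHom.id F := by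
    apply FreeGroup.ext_hom
    intro a
    simp [iota]
  calc iota (iota u) = (iota.comp iota) u := rfl
  _ = u := by rw [this]; rfl

/-- word reversal anti-map of F₂ -/
def rv (u : F) : F := (iota u)⁻¹

lemma rv_rv (u : F) : rv (rv u) = u := by
  simp [rv, iota_iota]

lemma rv_mul (u v : F) : rv (u * v) = rv v * rv u := by
  simp [rv, mul_inv_rev]

lemma rv_of (i : Fin 2) : rv (FreeGroup.of i) = FreeGroup.of i := by
  simp [rv, iota]

lemma rv_inv_of (i : Fin 2) : rv (FreeGroup.of i)⁻¹ = (FreeGroup.of i)⁻¹ := by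
  simp [rv, iota]


/-! ### words for elements of F₂ -/

def toG (p : Fin 2 × Bool) : Gw := cond p.2 (emb (FreeGroup.of p.1)) (emb (FreeGroup.of p.1))⁻¹

def toF (p : Fin 2 × Bool) : F := cond p.2 (FreeGroup.of p.1) (FreeGroup.of p.1)⁻¹

lemma toG_eq_emb (p : Fin 2 × Bool) : toG p = emb (toF p) := by
  rcases p with ⟨i, b⟩
  cases b <;> simp [toG, toF]

lemma toG_mem (p : Fin 2 × Bool) : toG p ∈ genSet := by
  rcases p with ⟨i, b⟩
  fin_cases i <;> cases b <;>
    simp [toG, embX, embY, genSet, Set.mem_inv]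

lemma rv_toF (p : Fin 2 × Bool) : rv (toF p) = toF p := by
  rcases p with ⟨i, b⟩
  cases b <;> simp [toF, rv_of, rv_inv_of]

lemma mk_single (p : Fin 2 × Bool) : FreeGroup.mk [p] = toF p := by
  rcases p with ⟨i, b⟩
  cases b
  · show FreeGroup.mk [(i, false)] = (FreeGroup.of i)⁻¹
    rw [show (FreeGroup.of i)⁻¹ = (FreeGroup.mk [(i, true)])⁻¹ from rfl, FreeGroup.inv_mk]
    rfl
  · rfl

lemma listval (L : List (Fin 2 × Bool)) :
    (L.map toG).prod = emb (FreeGroup.mk L) ∧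
      ((L.map toG).reverse).prod = emb (rv (FreeGroup.mk L)) := by
  induction L with
  | nil =>
      constructor <;> simp [← FreeGroup.one_eq_mk, rv]
  | cons p L ih =>
      have hmk : FreeGroup.mk (p :: L) = toF p * FreeGroup.mk L := by
        rw [← mk_single, FreeGroup.mul_mk]; rfl
      constructor
      · simp only [List.map_cons, List.prod_cons, ih.1, hmk, _root_.map_mul, toG_eq_emb]
      · simp only [List.map_cons, List.reverse_cons, List.prod_append, List.prod_cons,
          List.prod_nil, ih.2, hmk, rv_mul, _root_.map_mul, toG_eq_emb, rv_toF, mul_one]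

def wordOf (u : F) : List Gw := u.toWord.map toG

lemma wordOf_mem (u : F) : ∀ a ∈ wordOf u, a ∈ genSet := by
  intro a ha
  obtain ⟨p, -, rfl⟩ := List.mem_map.1 ha
  exact toG_mem p

lemma wordOf_prod (u : F) : (wordOf u).prod = emb u := by
  simpa [wordOf, FreeGroup.mk_toWord] using (listval u.toWord).1

lemma wordOf_rev_prod (u : F) : ((wordOf u).reverse).prod = emb (rv u) := by
  simpa [wordOf, FreeGroup.mk_toWord] using (listval u.toWord).2

/-! ### generating set basics -/

lemma mem_genSet_inv {a : Gw} (h : a ∈ genSet) : a⁻¹ ∈ genSet := by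
  rcases h with h | h
  · exact Or.inr (by simpa [Set.mem_inv] using h)
  · rw [Set.mem_inv] at h
    exact Or.inl (by simpa using h)

lemma genX_mem : genX ∈ genSet := Or.inl (by simp)
lemma genY_mem : genY ∈ genSet := Or.inl (by simp)
lemma genS1_mem : genS1 ∈ genSet := Or.inl (by simp)
lemma genS2_mem : genS2 ∈ genSet := Or.inl (by simp)
lemma genC_mem : genC ∈ genSet := Or.inl (by simp)
lemma genXi_mem : genX⁻¹ ∈ genSet := mem_genSet_inv genX_mem
lemma genYi_mem : genY⁻¹ ∈ genSet := mem_genSet_inv genY_mem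
lemma genS1i_mem : genS1⁻¹ ∈ genSet := mem_genSet_inv genS1_mem
lemma genS2i_mem : genS2⁻¹ ∈ genSet := mem_genSet_inv genS2_mem
lemma genCi_mem : genC⁻¹ ∈ genSet := mem_genSet_inv genC_mem


/-! ### semidirect product computation lemmas -/

lemma act_single (τ : S3) (k : S3) (u : F) :
    (wreathAction F S3 τ) (Pi.mulSingle k u) = Pi.mulSingle (τ * k) u := by
  funext x
  change (Pi.mulSingle k u : S3 → F) (τ⁻¹ * x) = (Pi.mulSingle (τ * k) u : S3 → F) x
  simp only [Pi.mulSingle_apply, inv_mul_eq_iff_eq_mul]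

lemma conj_single_val (τ : S3) (k : S3) (u : F) :
    inr τ * inl (Pi.mulSingle k u) * (inr τ)⁻¹
      = (inl (Pi.mulSingle (τ * k) u) : Gw) := by
  rw [← _root_.map_inv, ← SemidirectProduct.inl_aut, act_single]

/-- the `T`-shape: commutator with `c`. -/
def Tt (h : Gw) : Gw := h * genC * h⁻¹ * genC⁻¹

lemma genC_eq : genC = (inr cc : Gw) := rfl
lemma genS1_eq : genS1 = (inr sa : Gw) := rfl
lemma genS2_eq : genS2 = (inr sb : Gw) := rfl

lemma Tt_single_val (k : S3) (t : F) :
    Tt (inl (Pi.mulSingle k t)) = inl (Pi.mulSingle k t * Pi.mulSingle (cc * k) t⁻¹) := by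
  unfold Tt
  rw [_root_.map_mul]
  have : genC * (inl (Pi.mulSingle k t) : Gw)⁻¹ * genC⁻¹ = inl (Pi.mulSingle (cc * k) t⁻¹) := by
    rw [← _root_.map_inv, ← Pi.mulSingle_inv, genC_eq, conj_single_val]
  rw [← this]
  group

/-! ### reachability: words with trivial product and prescribed reversed product -/

def Reach (n : Gw) : Prop :=
  ∃ v : List Gw, (∀ a ∈ v, a ∈ genSet) ∧ v.prod = 1 ∧ v.reverse.prod = n

lemma reach_one : Reach 1 := ⟨[], by simp, by simp, by simp⟩

lemma reach_mul {n n' : Gw} (h : Reach n) (h' : Reach n') : Reach (n * n') := by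
  obtain ⟨v, hv, hv1, hv2⟩ := h
  obtain ⟨w, hw, hw1, hw2⟩ := h'
  refine ⟨w ++ v, ?_, ?_, ?_⟩
  · intro a ha; rcases List.mem_append.1 ha with ha | ha
    · exact hw a ha
    · exact hv a ha
  · simp [List.prod_append, hv1, hw1]
  · simp [List.reverse_append, List.prod_append, hv2, hw2]

lemma rev_map_inv_prod (W : List Gw) : ((W.map (fun a => a⁻¹)).reverse).prod = (W.prod)⁻¹ := by
  induction W with
  | nil => simp
  | cons a W ih => simp [ih, List.prod_append]

lemma map_inv_prod (v : List Gw) : (v.map (fun a => a⁻¹)).prod = (v.reverse.prod)⁻¹ := by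
  induction v with
  | nil => simp
  | cons a v ih => simp [ih, List.prod_append]

lemma reach_inv {n : Gw} (h : Reach n) : Reach n⁻¹ := by
  obtain ⟨v, hv, hv1, hv2⟩ := h
  refine ⟨v.reverse.map (fun a => a⁻¹), ?_, ?_, ?_⟩
  · intro a ha
    obtain ⟨b, hb, rfl⟩ := List.mem_map.1 ha
    exact mem_genSet_inv (hv b (List.mem_reverse.1 hb))
  · rw [map_inv_prod, List.reverse_reverse, hv1, inv_one]
  · rw [← List.map_reverse, List.reverse_reverse, ← List.reverse_reverse v, map_inv_prod,
      List.reverse_reverse, hv2]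

def HH : Subgroup Gw where
  carrier := {n | Reach n}
  one_mem' := reach_one
  mul_mem' := fun h h' => reach_mul h h'
  inv_mem' := fun h => reach_inv h

lemma reach_conj {n : Gw} (h : Reach n) (W : List Gw) (hW : ∀ a ∈ W, a ∈ genSet) :
    Reach (W.reverse.prod * n * (W.reverse.prod)⁻¹) := by
  obtain ⟨v, hv, hv1, hv2⟩ := h
  refine ⟨(W.map (fun a => a⁻¹)).reverse ++ v ++ W, ?_, ?_, ?_⟩
  · intro a ha
    rcases List.mem_append.1 ha with ha | ha
    · rcases List.mem_append.1 ha with ha | ha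
      · obtain ⟨b, hb, rfl⟩ := List.mem_map.1 (List.mem_reverse.1 ha)
        exact mem_genSet_inv (hW b hb)
      · exact hv a ha
    · exact hW a ha
  · rw [List.prod_append, List.prod_append, rev_map_inv_prod, hv1, mul_one,
      inv_mul_cancel]
  · rw [List.reverse_append, List.reverse_append, List.reverse_reverse,
      List.prod_append, List.prod_append, hv2, map_inv_prod]
    group


/-! ### basic reachable elements -/

lemma prod3 (a b c : Gw) : ([a, b, c] : List Gw).prod = a * b * c := by
  simp [mul_assoc]

lemma reach_c : Reach genC := by
  refine ⟨[genC⁻¹, genS1, genS2], ?_, ?_, ?_⟩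
  · intro a ha
    simp only [List.mem_cons, List.not_mem_nil, or_false] at ha
    rcases ha with rfl | rfl | rfl
    exacts [genCi_mem, genS1_mem, genS2_mem]
  · rw [prod3, genC_eq, genS1_eq, genS2_eq, ← _root_.map_inv, ← _root_.map_mul, ← _root_.map_mul]
    rw [show cc⁻¹ * sa * sb = 1 by decide]
    exact _root_.map_one _
  · show ([genS2, genS1, genC⁻¹] : List Gw).prod = genC
    rw [prod3, genC_eq, genS1_eq, genS2_eq, ← _root_.map_inv, ← _root_.map_mul, ← _root_.map_mul]
    rw [show sb * sa * cc⁻¹ = cc by decide]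

lemma reach_cinv : Reach genC⁻¹ := reach_inv reach_c

/-! ### elements with a word whose reverse has a prescribed product -/

def HRW (h : Gw) : Prop :=
  ∃ W : List Gw, (∀ a ∈ W, a ∈ genSet) ∧ W.reverse.prod = h

lemma hrw_emb (u : F) : HRW (emb u) :=
  ⟨wordOf (rv u), wordOf_mem _, by rw [wordOf_rev_prod, rv_rv]⟩

lemma hrw_conj {h : Gw} (hh : HRW h) {l l' : Gw} (hl : l ∈ genSet) (hl' : l' ∈ genSet) :
    HRW (l * h * l') := by
  obtain ⟨W, hW, hWp⟩ := hh
  refine ⟨[l'] ++ W ++ [l], ?_, ?_⟩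
  · intro a ha
    rcases List.mem_append.1 ha with ha | ha
    · rcases List.mem_append.1 ha with ha | ha
      · simp only [List.mem_singleton] at ha; subst ha; exact hl'
      · exact hW a ha
    · simp only [List.mem_singleton] at ha; subst ha; exact hl
  · simp [List.reverse_append, List.prod_append, hWp, mul_assoc]

lemma hrw_reach_conj {h n : Gw} (hh : HRW h) (hn : Reach n) : Reach (h * n * h⁻¹) := by
  obtain ⟨W, hW, hWp⟩ := hh
  simpa [hWp] using reach_conj hn W hW

lemma conj_c_mem {h : Gw} (hh : HRW h) : Reach (Tt h) := by
  have h1 : Reach (h * genC * h⁻¹) := hrw_reach_conj hh reach_c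
  have := reach_mul h1 reach_cinv
  simpa [Tt, mul_assoc] using this

/-! ### commutators at coordinate 1 are reachable -/

lemma single_comm_aux (b1 b2 : S3 → F) :
    (inl b1 : Gw) * inl b2 * (inl b1)⁻¹ * (inl b2)⁻¹ = inl (b1 * b2 * b1⁻¹ * b2⁻¹) := by
  rw [_root_.map_mul, _root_.map_mul, _root_.map_mul, _root_.map_inv, _root_.map_inv]

lemma comm_mem (z t : F) : Reach (emb (z * t * z⁻¹ * t⁻¹)) := by
  have hT : Reach (Tt (emb t)) := conj_c_mem (hrw_emb t)
  have hconj : Reach (emb z * Tt (emb t) * (emb z)⁻¹) := hrw_reach_conj (hrw_emb z) hT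
  have hmem : Reach (emb z * Tt (emb t) * (emb z)⁻¹ * (Tt (emb t))⁻¹) :=
    reach_mul hconj (reach_inv hT)
  have hval : emb z * Tt (emb t) * (emb z)⁻¹ * (Tt (emb t))⁻¹ = emb (z * t * z⁻¹ * t⁻¹) := by
    rw [emb_def, emb_def, Tt_single_val, single_comm_aux, emb_def]
    congr 1
    funext k
    rcases s3cases k with hk | hk | hk | hk | hk | hk <;> subst hk <;>
      simp (config := { decide := true }) only [Pi.mul_apply, Pi.inv_apply,
        Pi.mulSingle_apply, Pi.one_apply, if_true, if_false] <;> group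
  rwa [hval] at hmem


lemma emb_commutator_mem {d : F} (hd : d ∈ commutator F) : Reach (emb d) := by
  have hle : commutator F ≤ HH.comap emb := by
    rw [commutator_def, Subgroup.commutator_def]
    refine (Subgroup.closure_le _).2 ?_
    rintro g ⟨g₁, -, g₂, -, rfl⟩
    show emb (g₁ * g₂ * g₁⁻¹ * g₂⁻¹) ∈ HH
    exact comm_mem g₁ g₂
  exact hle hd

/-! ### exponent sums and the abelianization -/

def expX : F →* Multiplicative ℤ :=
  FreeGroup.lift fun i => Multiplicative.ofAdd (if i = 0 then 1 else 0)

def expY : F →* Multiplicative ℤ :=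
  FreeGroup.lift fun i => Multiplicative.ofAdd (if i = 0 then 0 else 1)

def mX (u : F) : ℤ := Multiplicative.toAdd (expX u)
def mY (u : F) : ℤ := Multiplicative.toAdd (expY u)

lemma ab_eq (u : F) :
    Abelianization.of u
      = Abelianization.of (FreeGroup.of 0) ^ mX u * Abelianization.of (FreeGroup.of 1) ^ mY u := by
  induction u using FreeGroup.induction_on with
  | C1 => simp [mX, mY, expX, expY]
  | of x =>
      fin_cases x <;>
        simp [mX, mY, expX, expY, FreeGroup.lift_apply_of]
  | inv_of x _ =>
      fin_cases x <;>
        simp [mX, mY, expX, expY, FreeGroup.lift_apply_of]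
  | mul u v ihu ihv =>
      rw [_root_.map_mul, ihu, ihv, mul_mul_mul_comm]
      rw [show mX (u * v) = mX u + mX v by simp [mX, expX]]
      rw [show mY (u * v) = mY u + mY v by simp [mY, expY]]
      rw [zpow_add, zpow_add]

lemma ab_decomp (u : F) :
    (FreeGroup.of 0 ^ mX u * FreeGroup.of 1 ^ mY u)⁻¹ * u ∈ commutator F := by
  have h : Abelianization.of ((FreeGroup.of 0 ^ mX u * FreeGroup.of 1 ^ mY u)⁻¹ * u) = 1 := by
    rw [_root_.map_mul, _root_.map_inv, _root_.map_mul, map_zpow, map_zpow, ab_eq u]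
    group
  rwa [← QuotientGroup.eq_one_iff]

/-! ### power words -/

def powWord (a : Gw) (m : ℤ) : List Gw :=
  if 0 ≤ m then List.replicate m.toNat a else List.replicate (-m).toNat a⁻¹

lemma powWord_reverse (a : Gw) (m : ℤ) : (powWord a m).reverse = powWord a m := by
  unfold powWord; split <;> simp

lemma powWord_prod (a : Gw) (m : ℤ) : (powWord a m).prod = a ^ m := by
  unfold powWord
  split
  · rename_i h
    rw [List.prod_replicate, ← zpow_natCast, Int.toNat_of_nonneg h]
  · rename_i h
    rw [List.prod_replicate, inv_pow, ← zpow_natCast, Int.toNat_of_nonneg (by omega), ← zpow_neg,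
      neg_neg]

lemma powWord_mem {a : Gw} (ha : a ∈ genSet) (m : ℤ) : ∀ b ∈ powWord a m, b ∈ genSet := by
  intro b hb
  unfold powWord at hb
  split at hb <;> rw [List.eq_of_mem_replicate hb]
  · exact ha
  · exact mem_genSet_inv ha

/-! ### palindromic words for the top group -/

lemma perm_pal (σ : S3) : IsPalindrome genSet (inr σ : Gw) := by
  rcases s3cases σ with hσ | hσ | hσ | hσ | hσ | hσ <;> subst hσ
  · exact ⟨[], by simp, by simp, by simp⟩
  · exact ⟨[genS1], by simp [genS1_mem], by simp, by simp [genS1_eq]⟩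
  · exact ⟨[genS2], by simp [genS2_mem], by simp, by simp [genS2_eq]⟩
  · exact ⟨[genC], by simp [genC_mem], by simp, by simp [genC_eq]⟩
  · refine ⟨[genC⁻¹], by simp [genCi_mem], by simp, ?_⟩
    rw [List.prod_singleton, genC_eq, ← _root_.map_inv, show cc⁻¹ = c2 by decide]
  · refine ⟨[genS1, genS2, genS1], ?_, by simp, ?_⟩
    · intro a ha
      simp only [List.mem_cons, List.not_mem_nil, or_false] at ha
      rcases ha with rfl | rfl | rfl
      exacts [genS1_mem, genS2_mem, genS1_mem]
    · rw [prod3, genS1_eq, genS2_eq, ← _root_.map_mul, ← _root_.map_mul]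
      rfl


lemma reach_pal {n : Gw} (h : Reach n) : IsPalindrome genSet n := by
  obtain ⟨v, hv, hv1, hv2⟩ := h
  refine ⟨v ++ v.reverse, ?_, ?_, ?_⟩
  · intro a ha
    rcases List.mem_append.1 ha with ha | ha
    · exact hv a ha
    · exact hv a (List.mem_reverse.1 ha)
  · simp [List.reverse_append]
  · simp [List.prod_append, hv1, hv2]

/-! ### the six pieces -/

def aA (f : S3 → F) : F := f 1 * f cc * f c2
def bB (f : S3 → F) : F := f sa * f rr * f sb
def d1 (f : S3 → F) : F :=
  (FreeGroup.of 0 ^ mX (aA f) * FreeGroup.of 1 ^ mY (aA f))⁻¹ * aA f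
def t1 (f : S3 → F) : F := (f cc * f c2)⁻¹
def t2 (f : S3 → F) : F := (f c2)⁻¹
def d2 (f : S3 → F) : F :=
  (FreeGroup.of 0 ^ mX (bB f) * FreeGroup.of 1 ^ mY (bB f))⁻¹ * bB f
def z1 (f : S3 → F) : F := (f rr * f sb)⁻¹
def z2 (f : S3 → F) : F := (f sb)⁻¹

/-- the big correction element, lying in the normal closure of `c`. -/
def bigN (f : S3 → F) : Gw :=
  emb (d1 f) * Tt (emb (t1 f)) * Tt (genC * emb (t2 f) * genC⁻¹) *
    (genS1 * emb (d2 f) * genS1⁻¹) * Tt (genS1 * emb (z1 f) * genS1⁻¹) *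
    Tt (genS1 * (genS2 * (genS1 * emb (z2 f) * genS1⁻¹) * genS2⁻¹) * genS1⁻¹)

lemma hrw_genS1 : HRW (genS1 : Gw) := ⟨[genS1], by simp [genS1_mem], by simp⟩

lemma bigN_reach (f : S3 → F) : Reach (bigN f) := by
  have h1 : Reach (emb (d1 f)) := emb_commutator_mem (ab_decomp (aA f))
  have h2 : Reach (Tt (emb (t1 f))) := conj_c_mem (hrw_emb (t1 f))
  have h3 : Reach (Tt (genC * emb (t2 f) * genC⁻¹)) :=
    conj_c_mem (hrw_conj (hrw_emb (t2 f)) genC_mem genCi_mem)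
  have h4 : Reach (genS1 * emb (d2 f) * genS1⁻¹) :=
    hrw_reach_conj hrw_genS1 (emb_commutator_mem (ab_decomp (bB f)))
  have h5 : Reach (Tt (genS1 * emb (z1 f) * genS1⁻¹)) :=
    conj_c_mem (hrw_conj (hrw_emb (z1 f)) genS1_mem genS1i_mem)
  have h6 : Reach (Tt (genS1 * (genS2 * (genS1 * emb (z2 f) * genS1⁻¹) * genS2⁻¹) * genS1⁻¹)) :=
    conj_c_mem (hrw_conj (hrw_conj (hrw_conj (hrw_emb (z2 f))
      genS1_mem genS1i_mem) genS2_mem genS2i_mem) genS1_mem genS1i_mem)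
  exact reach_mul (reach_mul (reach_mul (reach_mul (reach_mul h1 h2) h3) h4) h5) h6

/-- pointwise value of the big correction element. -/
def NN (f : S3 → F) : S3 → F :=
  Pi.mulSingle (1 : S3) (d1 f) * (Pi.mulSingle (1 : S3) (t1 f) * Pi.mulSingle (cc * 1) (t1 f)⁻¹) *
    (Pi.mulSingle (cc * 1) (t2 f) * Pi.mulSingle (cc * (cc * 1)) (t2 f)⁻¹) *
    Pi.mulSingle (sa * 1) (d2 f) *
    (Pi.mulSingle (sa * 1) (z1 f) * Pi.mulSingle (cc * (sa * 1)) (z1 f)⁻¹) *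
    (Pi.mulSingle (sa * (sb * (sa * 1))) (z2 f) *
      Pi.mulSingle (cc * (sa * (sb * (sa * 1)))) (z2 f)⁻¹)

lemma bigN_val (f : S3 → F) : bigN f = inl (NN f) := by
  unfold bigN NN
  rw [emb_def, emb_def, emb_def, emb_def, emb_def, emb_def, genC_eq, genS1_eq, genS2_eq]
  simp only [conj_single_val, Tt_single_val, ← _root_.map_mul]

lemma genX_zpow (m : ℤ) :
    genX ^ m = (inl (Pi.mulSingle (1 : S3) (FreeGroup.of 0 ^ m)) : Gw) := by
  rw [← embX, ← map_zpow]; rfl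

lemma genY_zpow (m : ℤ) :
    genY ^ m = (inl (Pi.mulSingle (1 : S3) (FreeGroup.of 1 ^ m)) : Gw) := by
  rw [← embY, ← map_zpow]; rfl

lemma genS1_inv : (genS1 : Gw)⁻¹ = genS1 := by
  rw [genS1_eq, ← _root_.map_inv, show sa⁻¹ = sa by decide]

lemma sconj_val (v : F) :
    genS1 * (inl (Pi.mulSingle (1 : S3) v) : Gw) * genS1
      = inl (Pi.mulSingle (sa * 1) v) := by
  nth_rewrite 2 [← genS1_inv]
  rw [genS1_eq, conj_single_val]


lemma main_val (f : S3 → F) (σ : S3) :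
    genX ^ mX (aA f) * (genY ^ mY (aA f) * ((genS1 * genX ^ mX (bB f) * genS1) *
      ((genS1 * genY ^ mY (bB f) * genS1) * (bigN f * inr σ))))
      = (⟨f, σ⟩ : Gw) := by
  rw [genX_zpow (mX (aA f)), genY_zpow (mY (aA f)), genX_zpow (mX (bB f)),
    genY_zpow (mY (bB f)), sconj_val, sconj_val, bigN_val]
  simp only [← mul_assoc, ← _root_.map_mul]
  apply SemidirectProduct.ext
  · simp only [SemidirectProduct.mul_left, SemidirectProduct.left_inl,
      SemidirectProduct.right_inl, SemidirectProduct.left_inr, _root_.map_one,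
      MulAut.one_apply, mul_one, one_mul]
    show _ = f
    funext k
    rcases s3cases k with hk | hk | hk | hk | hk | hk <;> subst hk <;>
      simp (config := { decide := true }) only [NN, aA, bB, d1, t1, t2, d2, z1, z2,
        Pi.mul_apply, Pi.mulSingle_apply, if_true, if_false, one_mul, mul_one] <;>
      group
  · simp only [SemidirectProduct.mul_right, SemidirectProduct.right_inl,
      SemidirectProduct.right_inr, one_mul]


lemma main_decomp (g : Gw) :
    ∃ L : List Gw, L.length ≤ 20 ∧ (∀ p ∈ L, IsPalindrome genSet p) ∧ L.prod = g := by
  obtain ⟨f, σ⟩ := g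
  refine ⟨[genX ^ mX (aA f), genY ^ mY (aA f), genS1 * genX ^ mX (bB f) * genS1,
    genS1 * genY ^ mY (bB f) * genS1, bigN f, inr σ], by norm_num, ?_, ?_⟩
  · intro p hp
    simp only [List.mem_cons, List.not_mem_nil, or_false] at hp
    rcases hp with rfl | rfl | rfl | rfl | rfl | rfl
    · exact ⟨powWord genX (mX (aA f)), powWord_mem genX_mem _, powWord_reverse _ _,
        powWord_prod _ _⟩
    · exact ⟨powWord genY (mY (aA f)), powWord_mem genY_mem _, powWord_reverse _ _,
        powWord_prod _ _⟩
    · refine ⟨[genS1] ++ powWord genX (mX (bB f)) ++ [genS1], ?_, ?_, ?_⟩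
      · intro a ha
        rcases List.mem_append.1 ha with ha | ha
        · rcases List.mem_append.1 ha with ha | ha
          · simp only [List.mem_singleton] at ha; subst ha; exact genS1_mem
          · exact powWord_mem genX_mem _ a ha
        · simp only [List.mem_singleton] at ha; subst ha; exact genS1_mem
      · simp [List.reverse_append, powWord_reverse]
      · simp [List.prod_append, powWord_prod, mul_assoc]
    · refine ⟨[genS1] ++ powWord genY (mY (bB f)) ++ [genS1], ?_, ?_, ?_⟩
      · intro a ha
        rcases List.mem_append.1 ha with ha | ha
        · rcases List.mem_append.1 ha with ha | ha
          · simp only [List.mem_singleton] at ha; subst ha; exact genS1_mem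
          · exact powWord_mem genY_mem _ a ha
        · simp only [List.mem_singleton] at ha; subst ha; exact genS1_mem
      · simp [List.reverse_append, powWord_reverse]
      · simp [List.prod_append, powWord_prod, mul_assoc]
    · exact reach_pal (bigN_reach f)
    · exact perm_pal σ
  · simp only [List.prod_cons, List.prod_nil, mul_one]
    exact main_val f σ

end PWaux


/-- `pw(F₂ ≀ S₃, S) ≤ 20`: every element of `F₂ ≀ S₃` is a product of at most `20`
palindromes with respect to `S = {x, y, s₁, s₂, c}`. -/
theorem pw_F2_wr_S3_le_20 :
    palWidth F2wrS3 genSet ≤ 20 ∧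
      ∀ g : F2wrS3, ∃ L : List F2wrS3, L.length ≤ 20 ∧
        (∀ p ∈ L, IsPalindrome genSet p) ∧ L.prod = g := by
  refine ⟨?_, PWaux.main_decomp⟩
  refine iSup_le fun g => ?_
  obtain ⟨L, hL, hpal, hprod⟩ := PWaux.main_decomp g
  refine le_trans (sInf_le ⟨L, rfl, hpal, hprod⟩) ?_
  exact_mod_cast hL
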